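/- Let q : ℝ → ℝ be a continuously differentiable function with compact support. Then for every y ∈ ℝ, the function Φ(y) = y · ∫ exp(y·s) q(s) ds is differentiable and its derivative satisfies Φ'(y) = ∫ exp(y·s) · (−s · q'(s)) ds. In other words, the Laplace transform of the function p(s) = −s·q'(s) equals ∂(y·φ(y))/∂y, where φ(y) = ∫ exp(y·s) q(s) ds. -/

import Mathlib

open MeasureTheory

/-- For `q` continuously differentiable with compact support, the Laplace transform of
`s ↦ −s q'(s)` equals the derivative of `y ↦ y · φ(y)` where `φ(y) = ∫ exp(y s) q(s) ds`. -/
theorem laplace_of_neg_mul_deriv (q : ℝ → ℝ) (hq : ContDiff ℝ 1 q)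
    (hsupp : HasCompactSupport q) :
    ∀ y : ℝ,
      HasDerivAt (fun t => t * ∫ s, Real.exp (t * s) * q s)
        (∫ s, Real.exp (y * s) * (-s * deriv q s)) y := by
  intro y
  have hqc : Continuous q := hq.continuous
  have hq'c : Continuous (deriv q) := hq.continuous_deriv le_rfl
  -- bound on the support
  obtain ⟨R, hR0, hsub⟩ : ∃ R : ℝ, 0 ≤ R ∧ tsupport q ⊆ Metric.closedBall 0 R := by
    obtain ⟨R, hsub⟩ := hsupp.isCompact.isBounded.subset_closedBall 0
    exact ⟨max R 0, le_max_right _ _,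
      hsub.trans (Metric.closedBall_subset_closedBall (le_max_left _ _))⟩
  set C : ℝ := R * Real.exp ((|y| + 1) * R) with hC
  have hC0 : 0 ≤ C := mul_nonneg hR0 (Real.exp_pos _).le
  -- derivative of φ
  have key : HasDerivAt (fun t => ∫ s, Real.exp (t * s) * q s)
      (∫ s, s * Real.exp (y * s) * q s) y := by
    have := hasDerivAt_integral_of_dominated_loc_of_deriv_le (μ := volume)
      (F := fun t s => Real.exp (t * s) * q s)
      (F' := fun t s => s * Real.exp (t * s) * q s)
      (x₀ := y) (bound := fun s => C * |q s|) (s := Metric.ball y 1) (Metric.ball_mem_nhds y one_pos)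
      ?_ ?_ ?_ ?_ ?_ ?_
    · exact this.2
    · filter_upwards with t
      exact (Continuous.mul (by fun_prop) hqc).aestronglyMeasurable
    · exact ((Continuous.mul (by fun_prop) hqc).integrable_of_hasCompactSupport
        hsupp.mul_left)
    · exact (Continuous.mul (by fun_prop) hqc).aestronglyMeasurable
    · filter_upwards with s
      intro t ht
      by_cases hs : q s = 0
      · simp [hs, hC0, abs_nonneg]
      · have hsmem : s ∈ tsupport q := subset_tsupport q hs
        have hsR : |s| ≤ R := by
          have := hsub hsmem
          simpa [Metric.mem_closedBall, Real.dist_eq] using this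
        have hts : t * s ≤ (|y| + 1) * R := by
          calc t * s ≤ |t * s| := le_abs_self _
            _ = |t| * |s| := abs_mul t s
            _ ≤ (|y| + 1) * R := by
                apply mul_le_mul _ hsR (abs_nonneg s) (by positivity)
                have := Metric.mem_ball.mp ht
                rw [Real.dist_eq] at this
                calc |t| = |y + (t - y)| := by ring_nf
                  _ ≤ |y| + |t - y| := abs_add_le _ _
                  _ ≤ |y| + 1 := by linarith
        have : ‖s * Real.exp (t * s) * q s‖ = |s| * Real.exp (t * s) * |q s| := by
          simp [abs_mul, abs_of_pos (Real.exp_pos _)]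
        rw [this, hC]
        apply mul_le_mul_of_nonneg_right _ (abs_nonneg _)
        exact mul_le_mul hsR (Real.exp_le_exp.mpr hts) (Real.exp_pos _).le hR0
    · exact ((continuous_const.mul hqc.abs).integrable_of_hasCompactSupport
        hsupp.abs.mul_left)
    · filter_upwards with s
      intro t ht
      have h1 : HasDerivAt (fun u : ℝ => u * s) s t := by
        simpa using (hasDerivAt_id t).mul_const s
      have h2 : HasDerivAt (fun u : ℝ => Real.exp (u * s)) (Real.exp (t * s) * s) t := h1.exp
      have := h2.mul_const (q s)
      exact this.congr_deriv (by ring)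
  -- product rule
  have hprod : HasDerivAt (fun t => t * ∫ s, Real.exp (t * s) * q s)
      (1 * (∫ s, Real.exp (y * s) * q s) + y * ∫ s, s * Real.exp (y * s) * q s) y :=
    (hasDerivAt_id y).mul key
  -- integration by parts
  have hu : ∀ s : ℝ, HasDerivAt (fun s : ℝ => s * Real.exp (y * s))
      (Real.exp (y * s) + y * (s * Real.exp (y * s))) s := by
    intro s
    have h1 : HasDerivAt (fun u : ℝ => y * u) y s := by
      simpa using (hasDerivAt_id s).const_mul y
    have h2 : HasDerivAt (fun u : ℝ => Real.exp (y * u)) (Real.exp (y * s) * y) s := h1.exp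
    have := (hasDerivAt_id s).mul h2
    exact this.congr_deriv (by simp only [id_eq]; ring)
  have hv : ∀ s : ℝ, HasDerivAt q (deriv q s) s := fun s =>
    (hq.differentiable one_ne_zero s).hasDerivAt
  have huv' : Integrable ((fun s : ℝ => s * Real.exp (y * s)) * deriv q) := by
    apply ((Continuous.mul (by fun_prop) hq'c).integrable_of_hasCompactSupport
      (hsupp.deriv.mul_left))
  have hu'v : Integrable ((fun s : ℝ => Real.exp (y * s) + y * (s * Real.exp (y * s))) * q) := by
    apply ((Continuous.mul (by fun_prop) hqc).integrable_of_hasCompactSupport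
      hsupp.mul_left)
  have huv : Integrable ((fun s : ℝ => s * Real.exp (y * s)) * q) := by
    apply ((Continuous.mul (by fun_prop) hqc).integrable_of_hasCompactSupport
      hsupp.mul_left)
  have ibp := integral_mul_deriv_eq_deriv_mul_of_integrable (fun s _ => hu s) (fun s _ => hv s) huv' hu'v huv
  -- massage
  have e1 : (∫ s, Real.exp (y * s) * (-s * deriv q s))
      = - ∫ s, s * Real.exp (y * s) * deriv q s := by
    rw [← integral_neg]
    congr 1; funext s; ring
  have e2 : (∫ s, (Real.exp (y * s) + y * (s * Real.exp (y * s))) * q s)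
      = (∫ s, Real.exp (y * s) * q s) + y * ∫ s, s * Real.exp (y * s) * q s := by
    have : ∀ s : ℝ, (Real.exp (y * s) + y * (s * Real.exp (y * s))) * q s
        = Real.exp (y * s) * q s + y * (s * Real.exp (y * s) * q s) := by
      intro s; ring
    simp_rw [this]
    have i1 : Integrable (fun s : ℝ => Real.exp (y * s) * q s) :=
      (Continuous.mul (by fun_prop) hqc).integrable_of_hasCompactSupport hsupp.mul_left
    have i2 : Integrable (fun s : ℝ => y * (s * Real.exp (y * s) * q s)) :=
      ((Continuous.mul (by fun_prop) hqc).integrable_of_hasCompactSupport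
        (hsupp.mul_left : HasCompactSupport fun s : ℝ => s * Real.exp (y * s) * q s)).const_mul y
    rw [integral_add i1 i2, integral_const_mul]
  have : (∫ s, Real.exp (y * s) * (-s * deriv q s))
      = 1 * (∫ s, Real.exp (y * s) * q s) + y * ∫ s, s * Real.exp (y * s) * q s := by
    rw [e1]
    rw [ibp]
    rw [neg_neg] at *
    rw [e2]; ring
  rw [this]
  exact hprod
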